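/- Assume R/c < 1 − α, and let b, b' ≥ 0 be arbitrary. Define U : [0,∞) → ℝ by U(x) = −c·x + R·p_{b'}(x) for 0 ≤ x < b; U(x) = −c·x + R·[(1−α)·p_{b'}(x) + α·(x − b)]/(1 − α + α·(x − b)) for b ≤ x < b+1; and U(x) = −c·x + (α + (1−α)·p_{b'}(x))·R for x ≥ b+1. Then U is strictly decreasing on [0,∞). Hence no two-step dynamic audit (a test with entrance value b' followed by a static audit with entrance value b) can incentivize a positive investment from a vendor with R/c < 1 − α. -/

import Mathlib

/-- The truncated-linear test with entrance value `b`. -/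
noncomputable def pb (b : ℝ) : ℝ → ℝ := fun x =>
  if x < b then 0 else if x < b + 1 then x - b else 1

lemma pb_nonneg (b x : ℝ) : 0 ≤ pb b x := by
  simp only [pb]; split_ifs <;> linarith

lemma pb_le_one (b x : ℝ) : pb b x ≤ 1 := by
  simp only [pb]; split_ifs <;> linarith

lemma pb_lip (b x y : ℝ) (h : x ≤ y) : pb b y - pb b x ≤ y - x := by
  simp only [pb]; split_ifs <;> linarith

lemma pb_mono (b x y : ℝ) (h : x ≤ y) : pb b x ≤ pb b y := by
  simp only [pb]; split_ifs <;> linarith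

noncomputable def Gfun (α b b' : ℝ) : ℝ → ℝ := fun x =>
  if x < b then pb b' x
  else if x < b + 1 then ((1-α)*pb b' x + α*(x-b))/(1-α+α*(x-b))
  else α + (1-α)*pb b' x

/-- within-middle-piece multiplied Lipschitz bound -/
lemma gmid_lip (α b b' : ℝ) (hα0 : 0 < α) (hα1 : α < 1) (x y : ℝ)
    (hx : b ≤ x) (hxy : x ≤ y) (hy : y ≤ b + 1) :
    (1-α) * (((1-α)*pb b' y + α*(y-b))/(1-α+α*(y-b))
      - ((1-α)*pb b' x + α*(x-b))/(1-α+α*(x-b))) ≤ y - x := by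
  have hP0 := pb_nonneg b' x
  have hP1 := pb_le_one b' x
  have hQ0 := pb_nonneg b' y
  have hQ1 := pb_le_one b' y
  have hlip := pb_lip b' x y hxy
  have hmono := pb_mono b' x y hxy
  have hs : 0 ≤ x - b := by linarith
  have ht : x - b ≤ y - b := by linarith
  have hDs : 0 < 1-α+α*(x-b) := by nlinarith
  have hDt : 0 < 1-α+α*(y-b) := by nlinarith
  have h1α : 0 < 1 - α := by linarith
  have hh : 0 ≤ y - x := by linarith
  rw [div_sub_div _ _ (ne_of_gt hDt) (ne_of_gt hDs)]
  rw [mul_div_assoc', div_le_iff₀ (by positivity)]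
  have key1 : ((1 - α) * pb b' y + α * (y - b)) * (1 - α + α * (x - b)) -
      (1 - α + α * (y - b)) * ((1 - α) * pb b' x + α * (x - b))
      = (1-α) * ((pb b' y - pb b' x)*(1-α+α*(x-b)) + α*(y-x)*(1-pb b' x)) := by
    ring
  rw [key1]
  have key2 : (pb b' y - pb b' x)*(1-α+α*(x-b)) + α*(y-x)*(1-pb b' x)
      ≤ (y-x)*(1+α*(x-b)) := by
    nlinarith [mul_le_mul_of_nonneg_right hlip hDs.le,
      mul_nonneg (mul_nonneg hα0.le hh) hP0]
  have k2' : (1-α) * ((1-α) * ((pb b' y - pb b' x)*(1-α+α*(x-b)) + α*(y-x)*(1-pb b' x)))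
      ≤ (1-α) * ((1-α) * ((y-x)*(1+α*(x-b)))) := by
    exact mul_le_mul_of_nonneg_left (mul_le_mul_of_nonneg_left key2 h1α.le) h1α.le
  have k4 : (1-α)*(1-α)*(1+α*(x-b)) ≤ (1-α+α*(x-b))^2 := by
    nlinarith [mul_nonneg (mul_nonneg hα0.le hs) (mul_nonneg h1α.le (by linarith : (0:ℝ) ≤ 1+α)),
      sq_nonneg (α*(x-b))]
  have k5 : (1-α) * ((1-α) * ((y-x)*(1+α*(x-b))))
      ≤ (y-x) * ((1-α+α*(y-b))*(1-α+α*(x-b))) := by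
    nlinarith [mul_le_mul_of_nonneg_left k4 hh,
      mul_nonneg (mul_nonneg hh hDs.le) (mul_nonneg hα0.le hh)]
  calc (1-α) * ((1-α) * ((pb b' y - pb b' x)*(1-α+α*(x-b)) + α*(y-x)*(1-pb b' x)))
      ≤ (1-α) * ((1-α) * ((y-x)*(1+α*(x-b)))) := k2'
    _ ≤ (y-x) * ((1-α+α*(y-b))*(1-α+α*(x-b))) := k5

lemma gmid_b (α b b' : ℝ) (hα1 : α < 1) :
    ((1-α)*pb b' b + α*(b-b))/(1-α+α*(b-b)) = pb b' b := by
  have h1 : (1:ℝ) - α ≠ 0 := by linarith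
  rw [sub_self]
  rw [mul_zero, add_zero, add_zero, mul_div_cancel_left₀ _ h1]

lemma gmid_b1 (α b b' : ℝ) :
    ((1-α)*pb b' (b+1) + α*((b+1)-b))/(1-α+α*((b+1)-b)) = α + (1-α)*pb b' (b+1) := by
  have h : (b+1) - b = (1:ℝ) := by ring
  rw [h]
  have : (1:ℝ)-α+α*1 = 1 := by ring
  rw [this, mul_one, div_one]
  ring

lemma G_lip (α b b' : ℝ) (hα0 : 0 < α) (hα1 : α < 1) (x y : ℝ) (hxy : x ≤ y) :
    (1-α) * (Gfun α b b' y - Gfun α b b' x) ≤ y - x := by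
  have h1α : 0 < 1 - α := by linarith
  rcases lt_or_ge x b with hxb | hxb
  · rcases lt_or_ge y b with hyb | hyb
    · -- both left
      simp only [Gfun, if_pos hxb, if_pos hyb]
      have := pb_lip b' x y hxy
      have := pb_mono b' x y hxy
      nlinarith
    · rcases lt_or_ge y (b+1) with hyb1 | hyb1
      · -- x left, y mid
        simp only [Gfun, if_pos hxb, if_neg (not_lt.2 hyb), if_pos hyb1]
        have t1 := gmid_lip α b b' hα0 hα1 b y le_rfl hyb hyb1.le
        rw [gmid_b α b b' hα1] at t1
        have t2 := pb_lip b' x b hxb.le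
        have t3 := pb_mono b' x b hxb.le
        nlinarith
      · -- x left, y right
        simp only [Gfun, if_pos hxb, if_neg (not_lt.2 hyb), if_neg (not_lt.2 hyb1)]
        have t1 := gmid_lip α b b' hα0 hα1 b (b+1) le_rfl (by linarith) le_rfl
        rw [gmid_b α b b' hα1, gmid_b1 α b b'] at t1
        have t2 := pb_lip b' x b hxb.le
        have t3 := pb_mono b' x b hxb.le
        have t4 := pb_lip b' (b+1) y hyb1
        have t5 := pb_mono b' (b+1) y hyb1
        have hsq : (0:ℝ) ≤ 1 - (1-α)*(1-α) := by nlinarith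
        have f1 : (1-α)*(1-α)*(pb b' y - pb b' (b+1)) ≤ y - (b+1) := by
          nlinarith [mul_nonneg (sub_nonneg.2 t5) hsq]
        have f3 : (1-α)*(pb b' b - pb b' x) ≤ b - x := by
          nlinarith [mul_nonneg (sub_nonneg.2 t3) hsq]
        nlinarith [f1, f3, t1]
  · have hyb : ¬ y < b := not_lt.2 (le_trans hxb hxy)
    rcases lt_or_ge x (b+1) with hxb1 | hxb1
    · rcases lt_or_ge y (b+1) with hyb1 | hyb1
      · -- both mid
        simp only [Gfun, if_neg (not_lt.2 hxb), if_pos hxb1, if_neg hyb, if_pos hyb1]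
        exact gmid_lip α b b' hα0 hα1 x y hxb hxy hyb1.le
      · -- x mid, y right
        simp only [Gfun, if_neg (not_lt.2 hxb), if_pos hxb1, if_neg hyb,
          if_neg (not_lt.2 hyb1)]
        have t1 := gmid_lip α b b' hα0 hα1 x (b+1) hxb hxb1.le le_rfl
        rw [gmid_b1 α b b'] at t1
        have t4 := pb_lip b' (b+1) y hyb1
        have t5 := pb_mono b' (b+1) y hyb1
        have hsq : (0:ℝ) ≤ 1 - (1-α)*(1-α) := by nlinarith
        have f1 : (1-α)*(1-α)*(pb b' y - pb b' (b+1)) ≤ y - (b+1) := by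
          nlinarith [mul_nonneg (sub_nonneg.2 t5) hsq]
        nlinarith [f1, t1]
    · -- both right
      have hyb1 : ¬ y < b + 1 := not_lt.2 (le_trans hxb1 hxy)
      simp only [Gfun, if_neg (not_lt.2 hxb), if_neg (not_lt.2 hxb1), if_neg hyb, if_neg hyb1]
      have t4 := pb_lip b' x y hxy
      have t5 := pb_mono b' x y hxy
      have hsq : (0:ℝ) ≤ 1 - (1-α)*(1-α) := by nlinarith
      nlinarith [mul_nonneg (sub_nonneg.2 t5) hsq]

/-- Let `α ∈ (0,1)`, `c > 0`, `R ≥ 0` with `R/c < 1 − α`,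
and `b, b' ≥ 0`.  Define the two-step-audit utility
`U(x) = −c·x + R·p_{b'}(x)` for `0 ≤ x < b`;
`U(x) = −c·x + R·[(1−α)·p_{b'}(x) + α·(x−b)]/(1−α+α·(x−b))` for `b ≤ x < b+1`;
`U(x) = −c·x + (α + (1−α)·p_{b'}(x))·R` for `x ≥ b+1`.
Then `U` is strictly decreasing on `[0,∞)`: no two-step dynamic audit can
incentivize a positive investment from a vendor with `R/c < 1 − α`. -/
theorem dynamic_no_incentive_low_RoSI
    (α c R : ℝ) (hα0 : 0 < α) (hα1 : α < 1) (hc : 0 < c) (hR : 0 ≤ R)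
    (hlow : R / c < 1 - α)
    (b b' : ℝ) (hb : 0 ≤ b) (hb' : 0 ≤ b') :
    StrictAntiOn
      (fun x =>
        if x < b then -c * x + R * pb b' x
        else if x < b + 1 then
          -c * x + R * ((1 - α) * pb b' x + α * (x - b)) / (1 - α + α * (x - b))
        else -c * x + (α + (1 - α) * pb b' x) * R)
      (Set.Ici 0) := by
  intro x hx y hy hxy
  have h1α : 0 < 1 - α := by linarith
  have hRc : R < c * (1 - α) := by
    have := (div_lt_iff₀ hc).mp hlow
    linarith
  have hfx : ∀ z : ℝ, (if z < b then -c * z + R * pb b' z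
      else if z < b + 1 then
        -c * z + R * ((1 - α) * pb b' z + α * (z - b)) / (1 - α + α * (z - b))
      else -c * z + (α + (1 - α) * pb b' z) * R) = -c * z + R * Gfun α b b' z := by
    intro z
    simp only [Gfun]
    split_ifs <;> ring
  simp only [hfx]
  have key := G_lip α b b' hα0 hα1 x y hxy.le
  set gx := Gfun α b b' x
  set gy := Gfun α b b' y
  rcases le_or_gt (gy - gx) 0 with hg | hg
  · nlinarith [mul_nonpos_of_nonneg_of_nonpos hR hg]
  · have h1 : R * (gy - gx) ≤ c * (1-α) * (gy - gx) := by nlinarith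
    have h2 : c * (1-α) * (gy - gx) ≤ c * (y - x) := by nlinarith
    nlinarith
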